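/- For any n ≥ 4 and any prefix-reversals r_a, r_b with 2 ≤ a ≠ b ≤ n, the product (r_a r_b)^2 is not the identity permutation of {1,...,n}; i.e., the Pancake graph P_n contains no 4-cycles. -/
import Mathlib

def pancakeRev (n m : ℕ) : Equiv.Perm (Fin n) :=
  Function.Involutive.toPerm
    (fun a => if h : a.val < m ∧ m ≤ n then ⟨m - 1 - a.val, by omega⟩ else a)
    (by
      intro a
      beta_reduce
      by_cases h : a.val < m ∧ m ≤ n
      · rw [dif_pos h]
        have h2 : m - 1 - a.val < m ∧ m ≤ n := by omega
        rw [dif_pos h2]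
        apply Fin.ext
        simp
        omega
      · rw [dif_neg h, dif_neg h])

lemma pancakeRev_apply (n m : ℕ) (x : Fin n) :
    pancakeRev n m x = if h : x.val < m ∧ m ≤ n then ⟨m - 1 - x.val, by omega⟩ else x := rfl

lemma pancakeRev_val (n m : ℕ) (hm : m ≤ n) (x : Fin n) :
    ((pancakeRev n m) x).val = if x.val < m then m - 1 - x.val else x.val := by
  rw [pancakeRev_apply]
  by_cases h : x.val < m
  · rw [dif_pos ⟨h, hm⟩, if_pos h]
  · rw [dif_neg (by tauto), if_neg h]

lemma pancakeRev_invol (n m : ℕ) (x : Fin n) :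
    pancakeRev n m (pancakeRev n m x) = x := by
  rw [pancakeRev_apply, pancakeRev_apply]
  by_cases h : x.val < m ∧ m ≤ n
  · rw [dif_pos h]
    have h2 : (m - 1 - x.val) < m ∧ m ≤ n := ⟨by omega, h.2⟩
    rw [dif_pos h2]
    apply Fin.ext; simp; omega
  · rw [dif_neg h, dif_neg h]

lemma pancakeRev_sq (n m : ℕ) : pancakeRev n m * pancakeRev n m = 1 := by
  ext x
  simpa using congrArg Fin.val (pancakeRev_invol n m x)

lemma pancake_aux (n a b : ℕ) (hn : 4 ≤ n) (ha : 2 ≤ a) (han : a ≤ n)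
    (hb : 2 ≤ b) (hbn : b ≤ n) (hab : a < b) :
    (pancakeRev n a * pancakeRev n b) ^ 2 ≠ 1 := by
  intro h
  have h0 : ((pancakeRev n a * pancakeRev n b) ^ 2) ⟨0, by omega⟩ = ⟨0, by omega⟩ := by
    rw [h]; rfl
  rw [pow_two] at h0
  simp only [Equiv.Perm.mul_apply] at h0
  have hval := congrArg Fin.val h0
  rw [pancakeRev_val n a han, pancakeRev_val n b hbn, pancakeRev_val n a han,
      pancakeRev_val n b hbn] at hval
  simp only [Fin.val_mk] at hval
  split_ifs at hval <;> omega

theorem pancake_no_fourCycles (n a b : ℕ) (hn : 4 ≤ n) (ha : 2 ≤ a) (han : a ≤ n)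
    (hb : 2 ≤ b) (hbn : b ≤ n) (hab : a ≠ b) :
    (pancakeRev n a * pancakeRev n b) ^ 2 ≠ 1 := by
  rcases hab.lt_or_gt with h | h
  · exact pancake_aux n a b hn ha han hb hbn h
  · intro heq
    apply pancake_aux n b a hn hb hbn ha han h
    have h1 : ((pancakeRev n a * pancakeRev n b) ^ 2)⁻¹ = 1 := by rw [heq]; simp
    rw [← h1, ← inv_pow, mul_inv_rev,
      mul_eq_one_iff_inv_eq.mp (pancakeRev_sq n b),
      mul_eq_one_iff_inv_eq.mp (pancakeRev_sq n a)]
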